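/- Let X and Y be independent random variables with mean zero and Var(X+Y) = 1/2, and let Var(Y) ≤ 1/2. Then for all T ≥ 3, E[(X+Y)² 1_{|X+Y| ≥ T}] ≥ (1/4) E[X² 1_{|X| ≥ T+1}]. -/

import Mathlib

open Real MeasureTheory Set ProbabilityTheory

theorem stmt_13 {Ω : Type*} [MeasurableSpace Ω] (μ : Measure Ω) [IsProbabilityMeasure μ]
    (X Y : Ω → ℝ) (hXm : Measurable X) (hYm : Measurable Y)
    (hindep : IndepFun X Y μ)
    (hXint : Integrable X μ) (hYint : Integrable Y μ)
    (hX2 : Integrable (fun ω => (X ω) ^ 2) μ) (hY2 : Integrable (fun ω => (Y ω) ^ 2) μ)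
    (hXmean : ∫ ω, X ω ∂μ = 0) (hYmean : ∫ ω, Y ω ∂μ = 0)
    (hvarSum : variance (fun ω => X ω + Y ω) μ = 1 / 2)
    (hvarY : variance Y μ ≤ 1 / 2)
    (T : ℝ) (hT : 3 ≤ T) :
    (1 / 4) * ∫ ω in {ω | T + 1 ≤ |X ω|}, (X ω) ^ 2 ∂μ
      ≤ ∫ ω in {ω | T ≤ |X ω + Y ω|}, (X ω + Y ω) ^ 2 ∂μ := by
  set A : Set Ω := {ω | T + 1 ≤ |X ω|} with hA
  set B : Set Ω := {ω | |Y ω| ≤ 1} with hB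
  set S : Set Ω := {ω | T ≤ |X ω + Y ω|} with hS
  have hAm : MeasurableSet A := measurableSet_le measurable_const hXm.abs
  have hBm : MeasurableSet B := measurableSet_le hYm.abs measurable_const
  have hSm : MeasurableSet S := measurableSet_le measurable_const (hXm.add hYm).abs
  -- integrability of (X+Y)^2
  have hsum2 : Integrable (fun ω => (X ω + Y ω) ^ 2) μ := by
    apply Integrable.mono' ((hX2.const_mul 2).add (hY2.const_mul 2))
      ((hXm.add hYm).pow_const 2).aestronglyMeasurable
    filter_upwards with ω
    rw [Real.norm_eq_abs, abs_of_nonneg (sq_nonneg _)]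
    simp only [Pi.add_apply]
    nlinarith [sq_nonneg (X ω - Y ω)]
  -- ∫ Y^2 ≤ 1/2
  have hY2le : ∫ ω, (Y ω) ^ 2 ∂μ ≤ 1 / 2 := by
    have hmem : MemLp Y 2 μ := (memLp_two_iff_integrable_sq hYm.aestronglyMeasurable).2 hY2
    have hv := variance_eq_sub hmem
    simp only [Pi.pow_apply] at hv
    rw [hYmean] at hv
    simp at hv
    linarith [hvarY, hv.symm.le, hv.le]
  -- Chebyshev: μ B ≥ 1/2
  have hBc : (μ Bᶜ).toReal ≤ 1 / 2 := by
    have h1 : (μ Bᶜ).toReal = ∫ _ω in Bᶜ, (1 : ℝ) ∂μ := by simp; rfl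
    have h2 : ∫ _ω in Bᶜ, (1 : ℝ) ∂μ ≤ ∫ ω in Bᶜ, (Y ω) ^ 2 ∂μ := by
      apply setIntegral_mono_on (integrableOn_const (measure_ne_top μ _))
        hY2.integrableOn hBm.compl
      intro ω hω
      have h3 : 1 < |Y ω| := not_le.mp hω
      nlinarith [sq_abs (Y ω), abs_nonneg (Y ω)]
    have h3 : ∫ ω in Bᶜ, (Y ω) ^ 2 ∂μ ≤ ∫ ω, (Y ω) ^ 2 ∂μ :=
      setIntegral_le_integral hY2 (by filter_upwards with ω using sq_nonneg _)
    linarith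
  have hBge : (1 : ℝ) / 2 ≤ (μ B).toReal := by
    have hadd : (μ B).toReal + (μ Bᶜ).toReal = 1 := by
      rw [← ENNReal.toReal_add (measure_ne_top μ B) (measure_ne_top μ Bᶜ),
        measure_add_measure_compl hBm, measure_univ, ENNReal.toReal_one]
    linarith
  -- independence step
  set f : ℝ → ℝ := Set.indicator {x : ℝ | T + 1 ≤ |x|} (fun x => x ^ 2) with hf
  set g : ℝ → ℝ := Set.indicator {y : ℝ | |y| ≤ 1} (fun _ => (1 : ℝ)) with hg
  have hfm : Measurable f :=
    (measurable_id.pow_const 2).indicator (measurableSet_le measurable_const measurable_abs)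
  have hgm : Measurable g :=
    measurable_const.indicator (measurableSet_le measurable_abs measurable_const)
  have hmul : ∫ ω, (f ∘ X * g ∘ Y) ω ∂μ = (∫ ω, (f ∘ X) ω ∂μ) * ∫ ω, (g ∘ Y) ω ∂μ :=
    (hindep.comp hfm hgm).integral_mul_eq_mul_integral (hfm.comp hXm).aestronglyMeasurable
      (hgm.comp hYm).aestronglyMeasurable
  have hprod : (fun ω => (f ∘ X * g ∘ Y) ω) = Set.indicator (A ∩ B) (fun ω => (X ω) ^ 2) := by
    ext ω
    by_cases h1 : T + 1 ≤ |X ω| <;> by_cases h2 : |Y ω| ≤ 1 <;>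
      simp [hf, hg, Set.indicator, h1, h2, hA, hB]
  have hfX : (fun ω => (f ∘ X) ω) = Set.indicator A (fun ω => (X ω) ^ 2) := by
    ext ω
    by_cases h1 : T + 1 ≤ |X ω| <;> simp [hf, Set.indicator, h1, hA]
  have hgY : (fun ω => (g ∘ Y) ω) = Set.indicator B (fun _ => (1 : ℝ)) := by
    ext ω
    by_cases h2 : |Y ω| ≤ 1 <;> simp [hg, Set.indicator, h2, hB]
  rw [hprod, hfX, hgY] at hmul
  rw [integral_indicator (hAm.inter hBm), integral_indicator hAm, integral_indicator hBm,
    setIntegral_const, smul_eq_mul, mul_one] at hmul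
  -- key chain
  have hXA_nonneg : 0 ≤ ∫ ω in A, (X ω) ^ 2 ∂μ :=
    setIntegral_nonneg hAm fun ω _ => sq_nonneg _
  have step1 : (1 / 4) * ∫ ω in A, (X ω) ^ 2 ∂μ
      ≤ (1 / 2) * ∫ ω in A ∩ B, (X ω) ^ 2 ∂μ := by
    rw [hmul]; nlinarith [show μ.real B = (μ B).toReal from rfl]
  have step2 : (1 / 2) * ∫ ω in A ∩ B, (X ω) ^ 2 ∂μ
      ≤ ∫ ω in A ∩ B, (X ω + Y ω) ^ 2 ∂μ := by
    rw [show (1 / 2 : ℝ) * ∫ ω in A ∩ B, (X ω) ^ 2 ∂μ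
        = ∫ ω in A ∩ B, (1 / 2) * (X ω) ^ 2 ∂μ from (integral_const_mul _ _).symm]
    apply setIntegral_mono_on ((hX2.const_mul (1 / 2)).integrableOn)
      hsum2.integrableOn (hAm.inter hBm)
    rintro ω ⟨h1, h2⟩
    have h1' : T + 1 ≤ |X ω| := h1
    have h2' : |Y ω| ≤ 1 := h2
    have h4 : 4 ≤ |X ω| := by linarith
    nlinarith [neg_abs_le (X ω * Y ω), abs_mul (X ω) (Y ω), sq_abs (X ω),
      mul_le_mul_of_nonneg_left h2' (abs_nonneg (X ω)), abs_nonneg (Y ω), sq_nonneg (Y ω),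
      mul_nonneg (by linarith : (0:ℝ) ≤ |X ω| - 4) (abs_nonneg (X ω))]
  have step3 : ∫ ω in A ∩ B, (X ω + Y ω) ^ 2 ∂μ ≤ ∫ ω in S, (X ω + Y ω) ^ 2 ∂μ := by
    apply setIntegral_mono_set hsum2.integrableOn
      (Filter.Eventually.of_forall fun ω => sq_nonneg _)
    apply HasSubset.Subset.eventuallyLE
    rintro ω ⟨h1, h2⟩
    have h1' : T + 1 ≤ |X ω| := h1
    have h2' : |Y ω| ≤ 1 := h2
    have h3 : |X ω| ≤ |X ω + Y ω| + |Y ω| := by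
      have := abs_add_le (X ω + Y ω) (-(Y ω))
      simpa using this
    show T ≤ |X ω + Y ω|
    linarith
  linarith
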